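/- Let (A^ℤ, F) be a cellular automaton and Σ a transitive subshift. If F admits a blocking word along a bounded-variation curve h relative to Σ, then the set of equicontinuous points of F along h relative to Σ is a nonempty, σ-invariant, dense G_δ subset of Σ. -/

import Mathlib

open Classical

section Prelude

variable {A : Type*}

/-- The shift map on configurations. -/
def shift (x : ℤ → A) : ℤ → A := fun i => x (i + 1)

/-- The cylinder of the word `u` placed at position `p`. -/
def cylAt (u : List A) (p : ℤ) : Set (ℤ → A) :=
  {x | ∀ i : Fin u.length, x (p + ((i : ℕ) : ℤ)) = u.get i}

/-- The region of consequences of a set of configurations. -/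
def consSet (F : (ℤ → A) → (ℤ → A)) (X : Set (ℤ → A)) : Set (ℤ × ℕ) :=
  {q | ∀ x ∈ X, ∀ y ∈ X, F^[q.2] x q.1 = F^[q.2] y q.1}

/-- `F` is a cellular automaton with neighborhood `⟦r,s⟧`. -/
def IsCA (F : (ℤ → A) → (ℤ → A)) (r s : ℤ) : Prop :=
  (∀ x, F (shift x) = shift (F x)) ∧
  (∀ x y : ℤ → A, (∀ i : ℤ, r ≤ i → i ≤ s → x i = y i) → F x 0 = F y 0)

/-- A subshift: a closed shift-invariant set. -/
def IsSubshift [TopologicalSpace A] (S : Set (ℤ → A)) : Prop :=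
  IsClosed S ∧ shift '' S = S

/-- Two configurations agree on the centered window of radius `m`
(Cantor distance `< 2^{-m}`). -/
def close (m : ℕ) (x y : ℤ → A) : Prop := ∀ i : ℤ, |i| ≤ (m : ℤ) → x i = y i

/-- `y` is in the tube of radius `2^{-k}` along `h` around `x`:
for every time `n` the configurations `σ^{h n} ∘ F^n (x)` and `σ^{h n} ∘ F^n (y)`
agree on the window of radius `k`. -/
def tube (F : (ℤ → A) → (ℤ → A)) (h : ℕ → ℤ) (k : ℕ) (x y : ℤ → A) : Prop :=
  ∀ n : ℕ, ∀ i : ℤ, |i| ≤ (k : ℤ) → F^[n] x (i + h n) = F^[n] y (i + h n)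

/-- `x` is an equicontinuous point along `h` relative to `S`. -/
def eqPt (F : (ℤ → A) → (ℤ → A)) (S : Set (ℤ → A)) (h : ℕ → ℤ) (x : ℤ → A) : Prop :=
  ∀ k : ℕ, ∃ m : ℕ, ∀ y ∈ S, close m x y → tube F h k x y

/-- `F` is sensitive along `h` relative to `S`. -/
def sensitive (F : (ℤ → A) → (ℤ → A)) (S : Set (ℤ → A)) (h : ℕ → ℤ) : Prop :=
  ∃ k : ℕ, ∀ m : ℕ, ∀ x ∈ S, ∃ y ∈ S, close m x y ∧ ¬ tube F h k x y

/-- `F` is right-expansive along `h` relative to `S`. -/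
def rightExpansive (F : (ℤ → A) → (ℤ → A)) (S : Set (ℤ → A)) (h : ℕ → ℤ) : Prop :=
  ∃ k : ℕ, ∀ x ∈ S, ∀ y ∈ S, (∃ i : ℤ, 0 ≤ i ∧ x i ≠ y i) →
    ∀ z ∈ S, ¬ (tube F h k x z ∧ tube F h k y z)

/-- `F` is left-expansive along `h` relative to `S`. -/
def leftExpansive (F : (ℤ → A) → (ℤ → A)) (S : Set (ℤ → A)) (h : ℕ → ℤ) : Prop :=
  ∃ k : ℕ, ∀ x ∈ S, ∀ y ∈ S, (∃ i : ℤ, i ≤ 0 ∧ x i ≠ y i) →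
    ∀ z ∈ S, ¬ (tube F h k x z ∧ tube F h k y z)

/-- Curves with bounded variation. -/
def BV (h : ℕ → ℤ) : Prop := ∃ M : ℤ, 0 < M ∧ ∀ n : ℕ, |h (n + 1) - h n| ≤ M

/-- The preorder `h ≾ k` on curves. -/
def precsim (h k : ℕ → ℤ) : Prop := ∃ M : ℤ, 0 < M ∧ ∀ n : ℕ, h n ≤ k n + M

/-- The equivalence `h ∼ k` on curves. -/
def simEq (h k : ℕ → ℤ) : Prop := ∃ M : ℤ, 0 < M ∧ ∀ n : ℕ, k n - M ≤ h n ∧ h n ≤ k n + M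

/-- The word `u` belongs to the language of `S`. -/
def inLang (S : Set (ℤ → A)) (u : List A) : Prop := ∃ x ∈ S, x ∈ cylAt u 0

/-- Transitivity of a subshift, expressed on its language. -/
def transitiveSubshift (S : Set (ℤ → A)) : Prop :=
  ∀ u v : List A, inLang S u → inLang S v → ∃ w : List A, inLang S (u ++ w ++ v)

/-- `u` is a blocking word along `h` for the CA `F` of neighborhood `⟦r,s⟧`,
relative to the subshift `S`. -/
def blockingWord (F : (ℤ → A) → (ℤ → A)) (S : Set (ℤ → A)) (h : ℕ → ℤ) (r s : ℤ)
    (u : List A) : Prop :=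
  inLang S u ∧
  ∃ e : ℕ, 0 < e ∧
    (∀ n : ℕ, |h (n + 1) - h n| + s < (e : ℤ) ∧ |h (n + 1) - h n| - r < (e : ℤ)) ∧
    (e : ℤ) ≤ u.length ∧
    ∃ p : ℤ, {q : ℤ × ℕ | h q.2 ≤ q.1 ∧ q.1 < h q.2 + (e : ℤ)} ⊆ consSet F (S ∩ cylAt u p)

end Prelude


section Helpers

variable {A : Type*}

/-- Two-sided translation. -/
def tr (t : ℤ) (x : ℤ → A) : ℤ → A := fun i => x (i + t)

lemma trans_zero (x : ℤ → A) : tr 0 x = x := by funext i; simp [tr]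

lemma trans_trans (a b : ℤ) (x : ℤ → A) : tr a (tr b x) = tr (a + b) x := by
  funext i; simp [tr, add_assoc]

lemma shift_eq_trans (x : ℤ → A) : shift x = tr 1 x := rfl

lemma trans_neg_one_shift (x : ℤ → A) : tr (-1) (shift x) = x := by
  funext i; simp [tr, shift]

lemma shift_trans_neg_one (x : ℤ → A) : shift (tr (-1) x) = x := by
  funext i; simp [tr, shift]

lemma F_trans {F : (ℤ → A) → (ℤ → A)} {r s : ℤ} (hF : IsCA F r s) (t : ℤ) (x : ℤ → A) :
    F (tr t x) = tr t (F x) := by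
  have h1 : ∀ y : ℤ → A, F (tr 1 y) = tr 1 (F y) := by
    intro y; rw [← shift_eq_trans, ← shift_eq_trans]; exact hF.1 y
  have hneg : ∀ y : ℤ → A, F (tr (-1) y) = tr (-1) (F y) := by
    intro y
    have h2 := h1 (tr (-1) y)
    rw [trans_trans] at h2
    norm_num at h2
    rw [trans_zero] at h2
    rw [h2, trans_trans]; norm_num [trans_zero]
  induction t using Int.induction_on with
  | zero => rw [trans_zero, trans_zero]
  | succ i ih =>
      have : ((i : ℤ) + 1) = 1 + i := by ring
      rw [this, ← trans_trans, h1, ih, trans_trans]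
  | pred i ih =>
      have : (-(i : ℤ) - 1) = (-1) + (-i) := by ring
      rw [this, ← trans_trans, hneg, ih, trans_trans]

lemma iter_trans {F : (ℤ → A) → (ℤ → A)} {r s : ℤ} (hF : IsCA F r s) (n : ℕ) (t : ℤ)
    (x : ℤ → A) : F^[n] (tr t x) = tr t (F^[n] x) := by
  induction n with
  | zero => simp
  | succ n ih => rw [Function.iterate_succ_apply', Function.iterate_succ_apply', ih, F_trans hF]

lemma mem_S_trans [TopologicalSpace A] {S : Set (ℤ → A)} (hS : IsSubshift S) (t : ℤ)
    {x : ℤ → A} (hx : x ∈ S) : tr t x ∈ S := by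
  have h1 : ∀ y : ℤ → A, y ∈ S → tr 1 y ∈ S := by
    intro y hy
    rw [← shift_eq_trans, ← hS.2]; exact ⟨y, hy, rfl⟩
  have hneg : ∀ y : ℤ → A, y ∈ S → tr (-1) y ∈ S := by
    intro y hy
    rw [← hS.2] at hy
    obtain ⟨z, hz, hzy⟩ := hy
    rwa [← hzy, trans_neg_one_shift]
  induction t using Int.induction_on with
  | zero => rwa [trans_zero]
  | succ i ih =>
      have : ((i : ℤ) + 1) = 1 + i := by ring
      rw [this, ← trans_trans]; exact h1 _ ih
  | pred i ih =>
      have : (-(i : ℤ) - 1) = (-1) + (-i) := by ring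
      rw [this, ← trans_trans]; exact hneg _ ih

lemma localRule {F : (ℤ → A) → (ℤ → A)} {r s : ℤ} (hF : IsCA F r s) (x y : ℤ → A) (i : ℤ)
    (H : ∀ j : ℤ, i + r ≤ j → j ≤ i + s → x j = y j) : F x i = F y i := by
  have e1 : F x i = F (tr i x) 0 := by rw [F_trans hF]; simp [tr]
  have e2 : F y i = F (tr i y) 0 := by rw [F_trans hF]; simp [tr]
  rw [e1, e2]
  apply hF.2
  intro j hj1 hj2
  exact H (j + i) (by linarith) (by linarith)

lemma mem_cylAt_iff {u : List A} {q : ℤ} {x : ℤ → A} :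
    x ∈ cylAt u q ↔ ∀ (i : ℕ) (hi : i < u.length), x (q + i) = u[i] := by
  constructor
  · intro H i hi; exact H ⟨i, hi⟩
  · intro H i; exact H i i.2

lemma cylAt_trans {u : List A} {q t : ℤ} {x : ℤ → A} (hx : x ∈ cylAt u (q + t)) :
    tr t x ∈ cylAt u q := by
  rw [mem_cylAt_iff] at hx ⊢
  intro i hi
  have : (q + (i : ℤ)) + t = (q + t) + i := by ring
  simpa [tr, this] using hx i hi

lemma cylAt_append {a b : List A} {q : ℤ} {x : ℤ → A} :
    x ∈ cylAt (a ++ b) q ↔ x ∈ cylAt a q ∧ x ∈ cylAt b (q + a.length) := by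
  simp only [mem_cylAt_iff]
  constructor
  · intro H
    constructor
    · intro i hi
      have hi' : i < (a ++ b).length := by simp; omega
      have := H i hi'
      rwa [List.getElem_append_left hi] at this
    · intro i hi
      have hi' : a.length + i < (a ++ b).length := by simp; omega
      have := H (a.length + i) hi'
      rw [List.getElem_append_right (by omega)] at this
      simp only [Nat.add_sub_cancel_left] at this
      have harg : (q + (a.length : ℤ)) + i = q + ((a.length + i : ℕ) : ℤ) := by push_cast; ring
      rwa [harg]
  · intro ⟨H1, H2⟩ i hi
    rcases lt_or_ge i a.length with hlt | hge
    · rw [List.getElem_append_left hlt]; exact H1 i hlt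
    · rw [List.getElem_append_right hge]
      have := H2 (i - a.length) (by simp at hi; omega)
      have harg : (q + (a.length : ℤ)) + ((i - a.length : ℕ) : ℤ) = q + i := by omega
      rwa [harg] at this

end Helpers

section Core

variable {A : Type*} [TopologicalSpace A]

lemma propagate {F : (ℤ → A) → (ℤ → A)} {r s : ℤ} (hF : IsCA F r s)
    {S : Set (ℤ → A)} (hS : IsSubshift S) {h : ℕ → ℤ} {u : List A} {e : ℕ}
    (hslope : ∀ n : ℕ, |h (n + 1) - h n| + s < (e : ℤ) ∧ |h (n + 1) - h n| - r < (e : ℤ))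
    {p : ℤ} (hcons : {q : ℤ × ℕ | h q.2 ≤ q.1 ∧ q.1 < h q.2 + (e : ℤ)} ⊆ consSet F (S ∩ cylAt u p))
    (tL tR : ℤ) {x y : ℤ → A} (hx : x ∈ S) (hy : y ∈ S)
    (hxL : x ∈ cylAt u (p + tL)) (hxR : x ∈ cylAt u (p + tR))
    (hyL : y ∈ cylAt u (p + tL)) (hyR : y ∈ cylAt u (p + tR))
    (hagree : ∀ i : ℤ, h 0 + tL ≤ i → i < h 0 + (e : ℤ) + tR → x i = y i) :
    ∀ n : ℕ, ∀ i : ℤ, h n + tL ≤ i → i < h n + (e : ℤ) + tR → F^[n] x i = F^[n] y i := by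
  -- agreement on the shifted column at any time, for an occurrence offset t
  have column : ∀ (t : ℤ), x ∈ cylAt u (p + t) → y ∈ cylAt u (p + t) →
      ∀ n : ℕ, ∀ i : ℤ, h n + t ≤ i → i < h n + (e : ℤ) + t → F^[n] x i = F^[n] y i := by
    intro t hxt hyt n i hi1 hi2
    have hq : ((i - t, n) : ℤ × ℕ) ∈ {q : ℤ × ℕ | h q.2 ≤ q.1 ∧ q.1 < h q.2 + (e : ℤ)} := by
      constructor <;> simp <;> linarith
    have hc := hcons hq (tr t x) ⟨mem_S_trans hS t hx, cylAt_trans hxt⟩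
      (tr t y) ⟨mem_S_trans hS t hy, cylAt_trans hyt⟩
    simp only [iter_trans hF] at hc
    simpa [tr, sub_add_cancel] using hc
  intro n
  induction n with
  | zero => intro i h1 h2; exact hagree i h1 h2
  | succ n ih =>
      intro i h1 h2
      rcases lt_or_ge i (h (n+1) + (e : ℤ) + tL) with hcL | hmid1
      · exact column tL hxL hyL (n+1) i h1 hcL
      rcases le_or_gt (h (n+1) + tR) i with hcR | hmid2
      · exact column tR hxR hyR (n+1) i hcR h2
      -- middle region: use locality and the induction hypothesis
      rw [Function.iterate_succ_apply', Function.iterate_succ_apply']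
      apply localRule hF
      intro j hj1 hj2
      have habs := hslope n
      have ha1 : -(h (n+1) - h n) ≤ |h (n+1) - h n| := neg_le_abs _
      have ha2 : (h (n+1) - h n) ≤ |h (n+1) - h n| := le_abs_self _
      apply ih
      · linarith
      · linarith

end Core

section EqPt

variable {A : Type*} [TopologicalSpace A]

lemma eqPt_of_occurrences {F : (ℤ → A) → (ℤ → A)} {r s : ℤ} (hF : IsCA F r s)
    {S : Set (ℤ → A)} (hS : IsSubshift S) {h : ℕ → ℤ} {u : List A} {e : ℕ} (he : 0 < e)
    (hslope : ∀ n : ℕ, |h (n + 1) - h n| + s < (e : ℤ) ∧ |h (n + 1) - h n| - r < (e : ℤ))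
    {p : ℤ} (hcons : {q : ℤ × ℕ | h q.2 ≤ q.1 ∧ q.1 < h q.2 + (e : ℤ)} ⊆ consSet F (S ∩ cylAt u p))
    {x : ℤ → A} (hx : x ∈ S)
    (hocc : ∀ c : ℤ, (∃ L ≤ c, x ∈ cylAt u L) ∧ (∃ R, c ≤ R ∧ x ∈ cylAt u R)) :
    eqPt F S h x := by
  intro k
  obtain ⟨⟨L, hLle, hxL⟩, -⟩ := hocc (p - k)
  obtain ⟨-, ⟨R, hRle, hxR⟩⟩ := hocc (p + k)
  set tL : ℤ := L - p with htL
  set tR : ℤ := R - p with htR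
  have hpL : p + tL = L := by ring
  have hpR : p + tR = R := by ring
  set M : ℤ := |h 0| + |L| + |R| + |p| + (e : ℤ) + (u.length : ℤ) with hM
  have hM0 : 0 ≤ M := by positivity
  refine ⟨M.toNat, ?_⟩
  intro y hyS hclose
  have hMcast : (M.toNat : ℤ) = M := Int.toNat_of_nonneg hM0
  have habs : ∀ j : ℤ, -M ≤ j → j ≤ M → x j = y j := by
    intro j hj1 hj2
    apply hclose
    rw [hMcast, abs_le]; exact ⟨hj1, hj2⟩
  have haL : |h 0| ≥ 0 := abs_nonneg _
  have haL1 : -|L| ≤ L := neg_abs_le _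
  have haL2 : L ≤ |L| := le_abs_self _
  have haR1 : -|R| ≤ R := neg_abs_le _
  have haR2 : R ≤ |R| := le_abs_self _
  have hap1 : -|p| ≤ p := neg_abs_le _
  have hap2 : p ≤ |p| := le_abs_self _
  have hah1 : -|h 0| ≤ h 0 := neg_abs_le _
  have hah2 : h 0 ≤ |h 0| := le_abs_self _
  -- y is in both cylinders
  have hyL : y ∈ cylAt u (p + tL) := by
    rw [hpL, mem_cylAt_iff]
    intro i hi
    rw [← habs (L + i) (by push_cast; linarith [abs_nonneg (R:ℤ), abs_nonneg (p:ℤ)]) ?_]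
    · exact (mem_cylAt_iff.mp (hpL ▸ hxL)) i hi
    · have : (i : ℤ) ≤ (u.length : ℤ) := by exact_mod_cast le_of_lt hi
      linarith [abs_nonneg (R:ℤ)]
  have hyR : y ∈ cylAt u (p + tR) := by
    rw [hpR, mem_cylAt_iff]
    intro i hi
    rw [← habs (R + i) (by push_cast; linarith [abs_nonneg (L:ℤ)]) ?_]
    · exact (mem_cylAt_iff.mp (hpR ▸ hxR)) i hi
    · have : (i : ℤ) ≤ (u.length : ℤ) := by exact_mod_cast le_of_lt hi
      linarith [abs_nonneg (L:ℤ)]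
  have hxL' : x ∈ cylAt u (p + tL) := hpL ▸ hxL
  have hxR' : x ∈ cylAt u (p + tR) := hpR ▸ hxR
  have hagree : ∀ i : ℤ, h 0 + tL ≤ i → i < h 0 + (e : ℤ) + tR → x i = y i := by
    intro i h1 h2
    apply habs <;> [skip; skip] <;> simp only [htL, htR] at h1 h2 <;> linarith
  have key := propagate hF hS hslope hcons tL tR hx hyS hxL' hxR' hyL hyR hagree
  intro n i hik
  rw [abs_le] at hik
  apply key
  · have : tL ≤ -(k : ℤ) := by omega
    linarith [hik.1]
  · have : (k : ℤ) ≤ tR := by omega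
    have he' : (0:ℤ) < e := by exact_mod_cast he
    linarith [hik.2]

end EqPt

section Topo

variable {A : Type*} [TopologicalSpace A] [DiscreteTopology A]

lemma isClosed_cylAt (u : List A) (q : ℤ) : IsClosed (cylAt u q) := by
  have : cylAt u q = ⋂ i : Fin u.length, {x : ℤ → A | x (q + ((i : ℕ) : ℤ)) = u.get i} := by
    ext x; simp [cylAt, Set.mem_iInter]
  rw [this]
  exact isClosed_iInter fun i => isClosed_eq (continuous_apply _) continuous_const

def ball (m : ℕ) (x : ℤ → A) : Set (ℤ → A) := {y | close m x y}

lemma mem_ball_self (m : ℕ) (x : ℤ → A) : x ∈ ball m x := fun _ _ => rfl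

lemma close_symm {m : ℕ} {x y : ℤ → A} (hc : close m x y) : close m y x :=
  fun i hi => (hc i hi).symm

lemma close_trans {m : ℕ} {x y z : ℤ → A} (h1 : close m x y) (h2 : close m y z) :
    close m x z := fun i hi => (h1 i hi).trans (h2 i hi)

lemma isOpen_ball (m : ℕ) (x : ℤ → A) : IsOpen (ball m x) := by
  have : ball m x = ⋂ i ∈ Finset.Icc (-(m:ℤ)) (m:ℤ), (fun y : ℤ → A => y i) ⁻¹' {x i} := by
    ext y
    simp only [ball, close, Set.mem_iInter, Set.mem_preimage, Set.mem_singleton_iff,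
      Finset.mem_Icc]
    constructor
    · intro H i hi; exact (H i (abs_le.mpr hi)).symm
    · intro H i hi; exact (H i (abs_le.mp hi)).symm
  rw [this]
  exact isOpen_biInter_finset fun i _ =>
    IsOpen.preimage (continuous_apply i) (isOpen_discrete _)

lemma exists_ball_subset {x : ℤ → A} {V : Set (ℤ → A)} (hV : IsOpen V) (hxV : x ∈ V) :
    ∃ m : ℕ, ball m x ⊆ V := by
  have hnhds : V ∈ nhds x := hV.mem_nhds hxV
  rw [nhds_pi, Filter.mem_pi] at hnhds
  obtain ⟨I, hIfin, t, ht, hsub⟩ := hnhds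
  set J := (Set.Finite.image (fun i : ℤ => i.natAbs) hIfin).toFinset with hJ
  refine ⟨J.sup id, ?_⟩
  intro y hy
  apply hsub
  intro i hiI
  have hiJ : i.natAbs ∈ J := by simp [hJ]; exact ⟨i, hiI, rfl⟩
  have hle : i.natAbs ≤ J.sup id := Finset.le_sup (f := id) hiJ
  have hyi : y i = x i := by
    refine (hy i ?_).symm
    rw [Int.abs_eq_natAbs]
    exact_mod_cast hle
  rw [hyi]
  have := ht i
  rw [nhds_discrete] at this
  simpa using this

lemma cluster_exists [Finite A] (y : ℕ → (ℤ → A)) :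
    ∃ z : ℤ → A, ∀ C : Set (ℤ → A), IsClosed C → (∃ j0 : ℕ, ∀ j, j0 ≤ j → y j ∈ C) → z ∈ C := by
  obtain ⟨z, hz⟩ := exists_clusterPt_of_compactSpace (Filter.map y Filter.atTop)
  refine ⟨z, ?_⟩
  intro C hC ⟨j0, hj0⟩
  by_contra hzC
  have h1 : Cᶜ ∈ nhds z := hC.isOpen_compl.mem_nhds hzC
  have h2 : C ∈ Filter.map y Filter.atTop := by
    rw [Filter.mem_map]
    exact Filter.mem_of_superset (Filter.mem_atTop j0) (fun j hj => hj0 j hj)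
  have : (Cᶜ ∩ C : Set (ℤ → A)) ∈ nhds z ⊓ Filter.map y Filter.atTop :=
    Filter.inter_mem (Filter.mem_inf_of_left h1) (Filter.mem_inf_of_right h2)
  rw [Set.compl_inter_self] at this
  exact hz.ne (Filter.empty_mem_iff_bot.mp this)

end Topo

section Gdelta

variable {A : Type*} [TopologicalSpace A] [DiscreteTopology A]

lemma tube_trans_of {F : (ℤ → A) → (ℤ → A)} {h : ℕ → ℤ} {k : ℕ} {x y z : ℤ → A}
    (h1 : tube F h k x y) (h2 : tube F h k x z) : tube F h k y z :=
  fun n i hi => (h1 n i hi).symm.trans (h2 n i hi)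

lemma isGδ_eqPt (F : (ℤ → A) → (ℤ → A)) (S : Set (ℤ → A)) (h : ℕ → ℤ) :
    IsGδ (Subtype.val ⁻¹' {x | eqPt F S h x} : Set S) := by
  classical
  set T : ℕ → ℕ → Set (ℤ → A) := fun k m =>
    {x | ∀ y ∈ S, ∀ z ∈ S, close m x y → close m x z → tube F h k y z} with hT
  set U : ℕ → ℕ → Set (ℤ → A) := fun k m => ⋃ x₀ ∈ T k m, ball m x₀ with hU
  have hUopen : ∀ k m, IsOpen (U k m) :=
    fun k m => isOpen_biUnion fun x₀ _ => isOpen_ball m x₀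
  have hEq : (Subtype.val ⁻¹' {x | eqPt F S h x} : Set S) =
      ⋂ k : ℕ, ⋃ m : ℕ, Subtype.val ⁻¹' (U k m) := by
    ext a
    simp only [Set.mem_preimage, Set.mem_setOf_eq, Set.mem_iInter, Set.mem_iUnion]
    constructor
    · intro ha k
      obtain ⟨m, hm⟩ := ha k
      refine ⟨m, ?_⟩
      simp only [hU, Set.mem_iUnion]
      refine ⟨a.1, ?_, mem_ball_self m a.1⟩
      intro y hy z hz hcy hcz
      exact tube_trans_of (hm y hy hcy) (hm z hz hcz)
    · intro ha k
      obtain ⟨m, hm⟩ := ha k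
      simp only [hU, Set.mem_iUnion] at hm
      obtain ⟨x₀, hx₀T, hx₀b⟩ := hm
      refine ⟨m, ?_⟩
      intro y hy hcy
      exact hx₀T a.1 a.2 y hy hx₀b (close_trans hx₀b hcy)
  rw [hEq]
  exact IsGδ.iInter fun k => IsOpen.isGδ (isOpen_iUnion fun m =>
    (hUopen k m).preimage continuous_subtype_val)

lemma eqPt_shift {F : (ℤ → A) → (ℤ → A)} {r s : ℤ} (hF : IsCA F r s)
    {S : Set (ℤ → A)} (hS : IsSubshift S) {h : ℕ → ℤ} {x : ℤ → A}
    (hx : x ∈ S) (hex : eqPt F S h x) : shift x ∈ S ∧ eqPt F S h (shift x) := by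
  constructor
  · rw [← hS.2]; exact ⟨x, hx, rfl⟩
  · intro k
    obtain ⟨m, hm⟩ := hex (k + 1)
    refine ⟨m + 1, ?_⟩
    intro y hyS hclose
    set y' : ℤ → A := tr (-1) y with hy'
    have hy'S : y' ∈ S := mem_S_trans hS (-1) hyS
    have hy'eq : shift y' = y := shift_trans_neg_one y
    have hclose' : close m x y' := by
      intro i hi
      have h1 : |i - 1| ≤ ((m + 1 : ℕ) : ℤ) := by
        rw [abs_le] at hi ⊢; push_cast; omega
      have := hclose (i - 1) h1
      simp only [shift, hy', tr] at this ⊢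
      have e1 : i - 1 + 1 = i := by ring
      have e2 : i + -1 = i - 1 := by ring
      rw [e1] at this
      rw [e2]
      exact this
    have htube := hm y' hy'S hclose'
    intro n i hi
    have h1 : |i + 1| ≤ ((k + 1 : ℕ) : ℤ) := by
      rw [abs_le] at hi ⊢; push_cast; omega
    have := htube n (i + 1) h1
    have e1 : F^[n] (shift x) = tr 1 (F^[n] x) := by
      rw [shift_eq_trans, iter_trans hF]
    have e2 : F^[n] y = tr 1 (F^[n] y') := by
      rw [← hy'eq, shift_eq_trans, iter_trans hF]
    rw [e1, e2]
    simp only [tr]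
    have e3 : i + h n + 1 = (i + 1) + h n := by ring
    rw [e3]
    exact this

end Gdelta

section Density

variable {A : Type*} [Fintype A] [TopologicalSpace A] [DiscreteTopology A]

lemma mem_cylAt_of_eq {v : List A} {q q' : ℤ} {x : ℤ → A} (hx : x ∈ cylAt v q) (h : q = q') :
    x ∈ cylAt v q' := h ▸ hx

lemma dense_eqPt {F : (ℤ → A) → (ℤ → A)} {r s : ℤ} (hF : IsCA F r s)
    {S : Set (ℤ → A)} (hS : IsSubshift S) (htrans : transitiveSubshift S)
    {h : ℕ → ℤ} {u : List A} (huLang : inLang S u) {e : ℕ} (he : 0 < e)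
    (hslope : ∀ n : ℕ, |h (n + 1) - h n| + s < (e : ℤ) ∧ |h (n + 1) - h n| - r < (e : ℤ))
    (helen : (e : ℤ) ≤ u.length)
    {p : ℤ} (hcons : {q : ℤ × ℕ | h q.2 ≤ q.1 ∧ q.1 < h q.2 + (e : ℤ)} ⊆ consSet F (S ∩ cylAt u p)) :
    ∀ x ∈ S, ∀ m : ℕ, ∃ y ∈ S, close m x y ∧ eqPt F S h y := by
  have hu1 : 1 ≤ u.length := by omega
  intro x hxS m
  -- the central word of x
  set w : List A := (List.range (2 * m + 1)).map (fun l : ℕ => x (-(m : ℤ) + (l : ℤ))) with hwdef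
  have hwlen : w.length = 2 * m + 1 := by simp [hwdef]
  have hwget : ∀ (l : ℕ) (hl : l < w.length), w[l] = x (-(m : ℤ) + l) := by
    intro l hl
    simp [hwdef]
  have hw : inLang S w := by
    refine ⟨tr (-(m : ℤ)) x, mem_S_trans hS _ hxS, ?_⟩
    rw [mem_cylAt_iff]
    intro i hi
    rw [hwget i hi]
    simp [tr]
    ring_nf
  -- the extension step given by transitivity
  have step : ∀ vp : {v : List A // inLang S v},
      ∃ vp' : {v : List A // inLang S v}, ∃ d : ℕ,
        u.length ≤ d ∧ d + vp.1.length + u.length ≤ vp'.1.length ∧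
        ∀ (z : ℤ → A) (q : ℤ), z ∈ cylAt vp'.1 q →
          z ∈ cylAt u q ∧ z ∈ cylAt vp.1 (q + (d : ℤ)) ∧
            z ∈ cylAt u (q + (vp'.1.length : ℤ) - (u.length : ℤ)) := by
    rintro ⟨v, hv⟩
    obtain ⟨w1, h1⟩ := htrans u v huLang hv
    obtain ⟨w2, h2⟩ := htrans (u ++ w1 ++ v) u h1 huLang
    refine ⟨⟨(u ++ w1 ++ v) ++ w2 ++ u, h2⟩, u.length + w1.length, by omega, ?_, ?_⟩
    · simp [List.length_append]; omega
    · intro z q hz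
      simp only [cylAt_append, List.length_append] at hz
      push_cast at hz
      obtain ⟨⟨⟨⟨hz1, -⟩, hz3⟩, -⟩, hz5⟩ := hz
      refine ⟨hz1, mem_cylAt_of_eq hz3 (by push_cast; ring), mem_cylAt_of_eq hz5 ?_⟩
      simp only [List.length_append]
      push_cast
      ring
  choose f d hd1 hd2 hd3 using step
  set g : ℕ → {v : List A // inLang S v} := fun j => f^[j] ⟨w, hw⟩ with hg
  have g0 : (g 0).1 = w := rfl
  have gsucc : ∀ j, g (j + 1) = f (g j) := fun j => Function.iterate_succ_apply' f j _
  set o : ℕ → ℤ := fun j => ∑ l ∈ Finset.range j, (d (g l) : ℤ) with ho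
  have o0 : o 0 = 0 := by simp [ho]
  have osucc : ∀ j, o (j + 1) = o j + d (g j) := by
    intro j; simp [ho, Finset.sum_range_succ]
  have oge : ∀ j : ℕ, (j : ℤ) ≤ o j := by
    intro j
    induction j with
    | zero => simp [o0]
    | succ j ih =>
        have := hd1 (g j)
        rw [osucc]
        push_cast
        omega
  -- containment chain
  have chain : ∀ j' j : ℕ, j' ≤ j → ∀ (z : ℤ → A) (q : ℤ), z ∈ cylAt (g j).1 q →
      z ∈ cylAt (g j').1 (q + (o j - o j')) := by
    intro j' j hj
    induction j, hj using Nat.le_induction with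
    | base => intro z q hz; exact mem_cylAt_of_eq hz (by ring)
    | succ j hj ih =>
        intro z q hz
        rw [gsucc j] at hz
        have := (hd3 (g j) z q hz).2.1
        have h2 := ih z (q + (d (g j) : ℤ)) this
        refine mem_cylAt_of_eq h2 ?_
        rw [osucc]; ring
  -- realizations
  choose zc hzS hzc using fun j => (g j).2
  set y : ℕ → (ℤ → A) := fun j => tr (o j + m) (zc j) with hy
  have hyS : ∀ j, y j ∈ S := fun j => mem_S_trans hS _ (hzS j)
  have hyw : ∀ j, y j ∈ cylAt w (-(m : ℤ)) := by
    intro j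
    have h1 := chain 0 j (Nat.zero_le j) (zc j) 0 (hzc j)
    rw [g0, o0] at h1
    apply cylAt_trans
    exact mem_cylAt_of_eq h1 (by ring)
  -- u-occurrences in y j
  have hyL : ∀ i j : ℕ, i + 1 ≤ j → y j ∈ cylAt u (-(m : ℤ) - o (i + 1)) := by
    intro i j hij
    have h1 := chain (i + 1) j hij (zc j) 0 (hzc j)
    rw [gsucc i] at h1
    have h2 := (hd3 (g i) (zc j) _ h1).1
    apply cylAt_trans
    exact mem_cylAt_of_eq h2 (by ring)
  have hyR : ∀ i j : ℕ, i + 1 ≤ j →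
      y j ∈ cylAt u (-(m : ℤ) - o (i + 1) + ((g (i + 1)).1.length : ℤ) - (u.length : ℤ)) := by
    intro i j hij
    have h1 := chain (i + 1) j hij (zc j) 0 (hzc j)
    rw [gsucc i] at h1
    have h2 := (hd3 (g i) (zc j) _ h1).2.2
    apply cylAt_trans
    refine mem_cylAt_of_eq h2 ?_
    rw [← gsucc i]
    ring
  -- growth of the right occurrences
  set R : ℕ → ℤ := fun j => -(m : ℤ) - o j + ((g j).1.length : ℤ) - (u.length : ℤ) with hR
  have hRgrow : ∀ i : ℕ, (m : ℤ) + 1 + i ≤ R (i + 1) := by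
    intro i
    induction i with
    | zero =>
        have := hd2 (g 0)
        rw [← gsucc 0] at this
        have hlen : (g 0).1.length = 2 * m + 1 := by rw [g0]; exact hwlen
        have hos := osucc 0
        rw [o0] at hos
        norm_num at this hos ⊢
        simp only [hR]
        omega
    | succ i ih =>
        have := hd2 (g (i + 1))
        rw [← gsucc (i + 1)] at this
        have hos := osucc (i + 1)
        simp only [hR] at ih ⊢
        push_cast at ih ⊢
        omega
  -- take a cluster point
  obtain ⟨yy, hcl⟩ := cluster_exists y
  have hyyS : yy ∈ S := hcl S hS.1 ⟨0, fun j _ => hyS j⟩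
  have hyyw : yy ∈ cylAt w (-(m : ℤ)) :=
    hcl _ (isClosed_cylAt w _) ⟨0, fun j _ => hyw j⟩
  have hyyL : ∀ i : ℕ, yy ∈ cylAt u (-(m : ℤ) - o (i + 1)) := fun i =>
    hcl _ (isClosed_cylAt u _) ⟨i + 1, fun j hj => hyL i j hj⟩
  have hyyR : ∀ i : ℕ, yy ∈ cylAt u (-(m : ℤ) - o (i + 1) + ((g (i + 1)).1.length : ℤ) - (u.length : ℤ)) := fun i =>
    hcl _ (isClosed_cylAt u _) ⟨i + 1, fun j hj => hyR i j hj⟩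
  refine ⟨yy, hyyS, ?_, ?_⟩
  · -- close m x yy
    intro i hi
    rw [abs_le] at hi
    have hl : ((i + m).toNat) < w.length := by rw [hwlen]; omega
    have := (mem_cylAt_iff.mp hyyw) ((i + m).toNat) hl
    rw [hwget _ hl] at this
    have harg : -(m : ℤ) + ((i + m).toNat : ℤ) = i := by omega
    rw [harg] at this
    exact this.symm
  · -- eqPt via occurrences
    apply eqPt_of_occurrences hF hS he hslope hcons hyyS
    intro c
    constructor
    · refine ⟨-(m : ℤ) - o (c.natAbs + 1), ?_, hyyL c.natAbs⟩
      have := oge (c.natAbs + 1)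
      omega
    · refine ⟨-(m : ℤ) - o (c.natAbs + 1) + ((g (c.natAbs + 1)).1.length : ℤ) - (u.length : ℤ),
        ?_, hyyR c.natAbs⟩
      have := hRgrow c.natAbs
      simp only [hR] at this
      omega

end Density

/-- on a transitive subshift, a blocking word along `h` implies that
the set of equicontinuous points along `h` is nonempty, shift-invariant, and a
dense Gδ subset of `Σ`. -/
theorem stmt7 {A : Type*} [Fintype A] [TopologicalSpace A] [DiscreteTopology A]
    (F : (ℤ → A) → (ℤ → A)) (r s : ℤ) (hF : IsCA F r s)
    (S : Set (ℤ → A)) (hS : IsSubshift S) (htrans : transitiveSubshift S)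
    (h : ℕ → ℤ) (hh : BV h) (u : List A) (hu : blockingWord F S h r s u) :
    ({x ∈ S | eqPt F S h x}).Nonempty ∧
    (∀ x ∈ {x ∈ S | eqPt F S h x}, shift x ∈ {x ∈ S | eqPt F S h x}) ∧
    IsGδ (Subtype.val ⁻¹' {x | eqPt F S h x} : Set S) ∧
    Dense (Subtype.val ⁻¹' {x | eqPt F S h x} : Set S) := by
  obtain ⟨huLang, e, he, hslope, helen, p, hcons⟩ := hu
  have dens : ∀ x ∈ S, ∀ m : ℕ, ∃ y ∈ S, close m x y ∧ eqPt F S h y :=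
    dense_eqPt hF hS htrans huLang he hslope helen hcons
  refine ⟨?_, ?_, isGδ_eqPt F S h, ?_⟩
  · obtain ⟨x0, hx0, -⟩ := huLang
    obtain ⟨y, hyS, -, hey⟩ := dens x0 hx0 0
    exact ⟨y, hyS, hey⟩
  · rintro x ⟨hxS, hex⟩
    obtain ⟨h1, h2⟩ := eqPt_shift hF hS hxS hex
    exact ⟨h1, h2⟩
  · rw [dense_iff_inter_open]
    rintro U hU ⟨a, haU⟩
    obtain ⟨V, hVopen, hVpre⟩ := isOpen_induced_iff.mp hU
    have haV : (a : ℤ → A) ∈ V := by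
      rw [← hVpre] at haU; exact haU
    obtain ⟨m, hball⟩ := exists_ball_subset hVopen haV
    obtain ⟨y, hyS, hclose, hey⟩ := dens a.1 a.2 m
    refine ⟨⟨y, hyS⟩, ?_, hey⟩
    rw [← hVpre]
    exact hball hclose
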